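/- For every x ∈ D and every k ≥ 1, 𝔉(x) = 𝔉(x_1,…,x_k)·𝔉(T^k x) − 𝔉(x_1,…,x_{k−1})·x_k x_{k+1}·𝔉(T^{k+1} x). -/

import Mathlib

open scoped BigOperators

/-- Admissible index tuples: k₁ ≥ 1 and k_{i+1} ≥ k_i + 2. -/
def FAdm (m : ℕ) (k : Fin m → ℕ) : Prop :=
  (∀ i, 1 ≤ k i) ∧ ∀ i j : Fin m, (i : ℕ) + 1 = (j : ℕ) → k i + 2 ≤ k j

/-- The function 𝔉 given by the alternating multiple series
`𝔉(x) = 1 + ∑_{m≥1} (-1)^m ∑_{k₁≥1, k_{i+1}≥k_i+2} x_{k₁}x_{k₁+1}⋯x_{k_m}x_{k_m+1}`;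
the sequence is indexed so that `x k` is `x_k` for `k ≥ 1`. -/
noncomputable def Fcal (x : ℕ → ℂ) : ℂ :=
  ∑' p : (Σ m : ℕ, { k : Fin m → ℕ // FAdm m k }),
    (-1 : ℂ) ^ p.1 * ∏ i, x (p.2.1 i) * x (p.2.1 i + 1)

/-- 𝔉 of the finite sequence (x_1, …, x_n): x truncated after position n, padded by zeros. -/
noncomputable def FcalFin (n : ℕ) (x : ℕ → ℂ) : ℂ :=
  Fcal fun k => if k ≤ n then x k else 0

/-- 𝔉 of the finite segment (x_a, …, x_b); it equals 1 when the segment is empty (b = a-1)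
and, by convention, 0 when b = a-2 (a segment of "length -1"). -/
noncomputable def Fseg (x : ℕ → ℂ) (a b : ℕ) : ℂ :=
  if b + 1 < a then 0 else FcalFin (b + 1 - a) (fun j => x (j + a - 1))

namespace F2aux

abbrev A : Type := Σ m : ℕ, { k : Fin m → ℕ // FAdm m k }

noncomputable def term (y : ℕ → ℂ) (p : A) : ℂ :=
  (-1 : ℂ) ^ p.1 * ∏ i, y (p.2.1 i) * y (p.2.1 i + 1)

lemma Fcal_eq (y : ℕ → ℂ) : Fcal y = ∑' p : A, term y p := rfl

/-! ### admissibility helpers -/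

lemma adm_chain {m : ℕ} {k : Fin m → ℕ} (h : FAdm m k) :
    ∀ d : ℕ, ∀ i j : Fin m, (i : ℕ) + d = (j : ℕ) → k i + 2 * d ≤ k j := by
  intro d
  induction d with
  | zero =>
    intro i j hij
    have : i = j := Fin.ext (by omega)
    subst this; omega
  | succ d ih =>
    intro i j hij
    have hj' : (i : ℕ) + d < m := by omega
    have h1 := ih i ⟨(i : ℕ) + d, hj'⟩ rfl
    have h2 := h.2 ⟨(i : ℕ) + d, hj'⟩ j (by simpa using by omega)
    omega

lemma adm_lb {m : ℕ} {k : Fin m → ℕ} (h : FAdm m k) (i : Fin m) :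
    1 + 2 * (i : ℕ) ≤ k i := by
  have h0 : (0 : ℕ) < m := i.pos
  have h1 := adm_chain h (i : ℕ) ⟨0, h0⟩ i (by simp)
  have h2 := h.1 ⟨0, h0⟩
  omega

lemma adm_strictMono {m : ℕ} {k : Fin m → ℕ} (h : FAdm m k) : StrictMono k := by
  intro i j hij
  have h1 := adm_chain h ((j : ℕ) - (i : ℕ)) i j (by omega)
  have h2 : (i : ℕ) < (j : ℕ) := hij
  omega

lemma A_ext {m : ℕ} {k k' : Fin m → ℕ} {h : FAdm m k} {h' : FAdm m k'}
    (hkk : ∀ i, k i = k' i) : (⟨m, k, h⟩ : A) = ⟨m, k', h'⟩ := by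
  have : k = k' := funext hkk
  subst this
  rfl

lemma adm_shift {m : ℕ} {k : Fin m → ℕ} (h : FAdm m k) (c : ℕ) :
    FAdm m (fun i => k i + c) := by
  constructor
  · intro i; show 1 ≤ k i + c; have := h.1 i; omega
  · intro i j hij; show k i + c + 2 ≤ k j + c; have := h.2 i j hij; omega

lemma adm_cons {m : ℕ} {k : Fin m → ℕ} (h : FAdm m k) :
    FAdm (m + 1) (Fin.cons 1 (fun i => k i + 2)) := by
  constructor
  · intro i
    induction i using Fin.cases with
    | zero => simp
    | succ i => simp
  · intro i j hij
    induction i using Fin.cases with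
    | zero =>
      induction j using Fin.cases with
      | zero => simp at hij
      | succ j =>
        simp only [Fin.cons_zero, Fin.cons_succ]
        have := h.1 j; omega
    | succ i =>
      induction j using Fin.cases with
      | zero => simp at hij
      | succ j =>
        simp only [Fin.cons_succ]
        have hij' : (i : ℕ) + 1 = (j : ℕ) := by simpa [Fin.val_succ] using hij
        have := h.2 i j hij'
        omega

/-! ### summability -/

lemma summable_finsetProd {a : ℕ → ℝ} (ha0 : ∀ i, 0 ≤ a i) (ha : Summable a) :
    Summable fun S : Finset ℕ => ∏ i ∈ S, a i := by
  apply summable_of_sum_le (c := Real.exp (∑' i, a i))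
  · intro S
    exact Finset.prod_nonneg fun i _ => ha0 i
  · intro u
    set n : ℕ := u.sup (fun S => S.sup id) + 1 with hn
    have hsub : u ⊆ (Finset.range n).powerset := by
      intro S hS
      rw [Finset.mem_powerset]
      intro i hi
      have h1 : S.sup id ≤ u.sup (fun S => S.sup id) := Finset.le_sup hS
      have h2 : i ≤ S.sup id := Finset.le_sup (f := id) hi
      rw [Finset.mem_range]; omega
    calc ∑ S ∈ u, ∏ i ∈ S, a i ≤ ∑ S ∈ (Finset.range n).powerset, ∏ i ∈ S, a i := by
          apply Finset.sum_le_sum_of_subset_of_nonneg hsub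
          intro S _ _
          exact Finset.prod_nonneg fun i _ => ha0 i
      _ = ∏ i ∈ Finset.range n, (a i + 1) := by
          rw [Finset.prod_add]
          apply Finset.sum_congr rfl
          intro S _
          simp
      _ ≤ ∏ i ∈ Finset.range n, Real.exp (a i) := by
          apply Finset.prod_le_prod
          · intro i _; have := ha0 i; linarith
          · intro i _; exact Real.add_one_le_exp (a i)
      _ = Real.exp (∑ i ∈ Finset.range n, a i) := by rw [Real.exp_sum]
      _ ≤ Real.exp (∑' i, a i) := by
          apply Real.exp_le_exp.2
          exact ha.sum_le_tsum _ (fun i _ => ha0 i)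

def toFinset (p : A) : Finset ℕ := Finset.image p.2.1 Finset.univ

lemma toFinset_injective : Function.Injective toFinset := by
  rintro ⟨m, k, hk⟩ ⟨m', k', hk'⟩ h
  simp only [toFinset] at h
  have hcard : m = m' := by
    have c1 : (Finset.image k Finset.univ).card = m := by
      rw [Finset.card_image_of_injective _ (adm_strictMono hk).injective, Finset.card_univ,
        Fintype.card_fin]
    have c2 : (Finset.image k' Finset.univ).card = m' := by
      rw [Finset.card_image_of_injective _ (adm_strictMono hk').injective, Finset.card_univ,
        Fintype.card_fin]
    rw [h] at c1; omega
  subst hcard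
  have c1 : (Finset.image k Finset.univ).card = m := by
    rw [Finset.card_image_of_injective _ (adm_strictMono hk).injective, Finset.card_univ,
      Fintype.card_fin]
  have e1 := Finset.orderEmbOfFin_unique c1 (f := k)
    (fun x => Finset.mem_image_of_mem _ (Finset.mem_univ x)) (adm_strictMono hk)
  have e2 := Finset.orderEmbOfFin_unique c1 (f := k')
    (fun x => by rw [h]; exact Finset.mem_image_of_mem _ (Finset.mem_univ x)) (adm_strictMono hk')
  have : k = k' := by rw [e1, e2]
  subst this
  rfl

lemma summable_term (y : ℕ → ℂ)
    (hy : Summable fun j : ℕ => ‖y (j + 1) * y (j + 2)‖) :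
    Summable (term y) := by
  set a : ℕ → ℝ := fun j => ‖y j * y (j + 1)‖ with ha_def
  have ha : Summable a := by
    rw [← summable_nat_add_iff 1]
    convert hy using 2 with j
  apply Summable.of_norm
  have hfun : (fun p : A => ‖term y p‖) = (fun S : Finset ℕ => ∏ j ∈ S, a j) ∘ toFinset := by
    funext p
    rw [Function.comp_apply, toFinset, term, norm_mul, norm_prod, norm_pow, norm_neg, norm_one,
      one_pow, one_mul,
      Finset.prod_image (fun i _ j _ h => (adm_strictMono p.2.2).injective h)]
  rw [hfun]
  exact (summable_finsetProd (fun i => norm_nonneg _) ha).comp_injective toFinset_injective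

/-! ### the two shift maps and the set S1 -/

def S1 : Set A := {p : A | ∀ i : Fin p.1, p.2.1 i ≠ 1}

def m1 (p : A) : A := ⟨p.1, ⟨fun i => p.2.1 i + 1, adm_shift p.2.2 1⟩⟩

def m2 (p : A) : A := ⟨p.1 + 1, ⟨Fin.cons 1 (fun i => p.2.1 i + 2), adm_cons p.2.2⟩⟩

lemma m1_mem (p : A) : m1 p ∈ S1 := by
  intro i h
  have := p.2.2.1 i
  simp only [m1] at h
  omega

lemma m2_mem (p : A) : m2 p ∈ S1ᶜ := by
  intro h
  have := h (0 : Fin (p.1 + 1))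
  simp [m2] at this

lemma m1_injective : Function.Injective m1 := by
  rintro ⟨m, k, hk⟩ ⟨m', k', hk'⟩ e
  simp only [m1] at e
  injection e with e1 e2
  subst e1
  have e3 := Subtype.ext_iff.mp (eq_of_heq e2)
  exact A_ext fun i => by have := congrFun e3 i; simpa using this

lemma m2_injective : Function.Injective m2 := by
  rintro ⟨m, k, hk⟩ ⟨m', k', hk'⟩ e
  simp only [m2] at e
  injection e with e1 e2
  have e1' : m = m' := by omega
  subst e1'
  have e3 := Subtype.ext_iff.mp (eq_of_heq e2)
  refine A_ext fun i => ?_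
  have := congrFun e3 i.succ
  simpa using this

lemma m1_val (y : ℕ → ℂ) (p : A) :
    term y (m1 p) = term (fun j => y (j + 1)) p := rfl

lemma m2_val (y : ℕ → ℂ) (p : A) :
    term y (m2 p) = -(y 1 * y 2) * term (fun j => y (j + 2)) p := by
  rcases p with ⟨m, k, hk⟩
  show (-1 : ℂ) ^ (m + 1) * ∏ i : Fin (m + 1), y ((Fin.cons 1 (fun i => k i + 2) : Fin (m + 1) → ℕ) i)
      * y ((Fin.cons 1 (fun i => k i + 2) : Fin (m + 1) → ℕ) i + 1)
      = -(y 1 * y 2) * ((-1 : ℂ) ^ m * ∏ i : Fin m, y (k i + 2) * y (k i + 2 + 1))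
  simp only [term, m2, Fin.prod_univ_succ, Fin.cons_zero, Fin.cons_succ, pow_succ]
  have : ∀ i : Fin m, y (k i + 2) * y (k i + 2 + 1) = y (k i + 2) * y (k i + 1 + 2) := by
    intro i; ring_nf
  rw [Finset.prod_congr rfl fun i _ => this i]
  ring


lemma tsum_S1 (y : ℕ → ℂ) :
    ∑' p : ↥S1, term y ↑p = ∑' q : A, term (fun j => y (j + 1)) q := by
  apply tsum_eq_tsum_of_ne_zero_bij
    (i := fun q => (⟨m1 q.1, m1_mem q.1⟩ : ↥S1))
  · intro q q' e
    have : m1 q.1 = m1 q'.1 := Subtype.ext_iff.mp e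
    exact Subtype.ext (m1_injective this)
  · rintro ⟨⟨m, k, hk⟩, hmem⟩ hne
    have hk2 : ∀ i, 2 ≤ k i := by
      intro i
      have h1 := hk.1 i
      have h2 : k i ≠ 1 := hmem i
      omega
    have hadm : FAdm m (fun i => k i - 1) := by
      constructor
      · intro i; have := hk2 i; simp; omega
      · intro i j hij
        have := hk.2 i j hij
        have := hk2 i
        simp
        omega
    set q : A := ⟨m, ⟨fun i => k i - 1, hadm⟩⟩ with hq
    have hiq : m1 q = ⟨m, k, hk⟩ := by
      apply A_ext
      intro i
      have := hk2 i
      simp [m1, q]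
      omega
    have hgq : q ∈ Function.support (term fun j => y (j + 1)) := by
      have : term (fun j => y (j + 1)) q = term y ⟨m, k, hk⟩ := by
        rw [← m1_val, hiq]
      simpa [Function.mem_support, this] using hne
    exact ⟨⟨q, hgq⟩, Subtype.ext hiq⟩
  · intro q
    exact m1_val y q.1

lemma tsum_S1c (y : ℕ → ℂ) :
    ∑' p : ↥S1ᶜ, term y ↑p
      = ∑' q : A, -(y 1 * y 2) * term (fun j => y (j + 2)) q := by
  apply tsum_eq_tsum_of_ne_zero_bij
    (i := fun q => (⟨m2 q.1, m2_mem q.1⟩ : ↥S1ᶜ))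
  · intro q q' e
    have : m2 q.1 = m2 q'.1 := Subtype.ext_iff.mp e
    exact Subtype.ext (m2_injective this)
  · rintro ⟨⟨M, K, hK⟩, hmem⟩ hne
    have hex : ∃ i : Fin M, K i = 1 := by
      by_contra hc
      push_neg at hc
      exact hmem hc
    obtain ⟨i0, hi0⟩ := hex
    have hi0v : (i0 : ℕ) = 0 := by
      have := adm_lb hK i0
      omega
    obtain ⟨m, rfl⟩ : ∃ m, M = m + 1 := ⟨M - 1, by have := i0.pos; omega⟩
    have hK0 : K 0 = 1 := by
      have : i0 = (0 : Fin (m + 1)) := Fin.ext (by simpa using hi0v)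
      rwa [this] at hi0
    have hlb : ∀ i : Fin m, 3 ≤ K i.succ := by
      intro i
      have := adm_lb hK i.succ
      simp [Fin.val_succ] at this
      omega
    have hadm : FAdm m (fun i => K i.succ - 2) := by
      constructor
      · intro i; have := hlb i; simp; omega
      · intro i j hij
        have hstep := hK.2 i.succ j.succ (by simp [Fin.val_succ]; omega)
        have := hlb i
        simp
        omega
    set q : A := ⟨m, ⟨fun i => K i.succ - 2, hadm⟩⟩ with hq
    have hiq : m2 q = ⟨m + 1, K, hK⟩ := by
      apply A_ext
      intro i
      induction i using Fin.cases with
      | zero => simpa [m2, hq] using hK0.symm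
      | succ i =>
        have := hlb i
        simp [m2, q]
        omega
    have hgq : q ∈ Function.support (fun q => -(y 1 * y 2) * term (fun j => y (j + 2)) q) := by
      have : -(y 1 * y 2) * term (fun j => y (j + 2)) q = term y ⟨m + 1, K, hK⟩ := by
        rw [← m2_val, hiq]
      rw [Function.mem_support, this]
      exact hne
    exact ⟨⟨q, hgq⟩, Subtype.ext hiq⟩
  · intro q
    exact m2_val y q.1

lemma L1 (y : ℕ → ℂ) (hy : Summable fun j : ℕ => ‖y (j + 1) * y (j + 2)‖) :
    Fcal y = Fcal (fun j => y (j + 1)) - y 1 * y 2 * Fcal (fun j => y (j + 2)) := by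
  have hsum : Summable (term y) := summable_term y hy
  have hsplit := hsum.tsum_subtype_add_tsum_subtype_compl S1
  rw [Fcal_eq y, ← hsplit, tsum_S1 y, tsum_S1c y, tsum_mul_left, Fcal_eq, Fcal_eq]
  ring


/-! ### truncation -/

noncomputable def trunc (x : ℕ → ℂ) (c : ℕ) : ℕ → ℂ := fun j => if j ≤ c then x j else 0

lemma FcalFin_eq (c : ℕ) (x : ℕ → ℂ) : FcalFin c x = ∑' p : A, term (trunc x c) p := rfl

lemma summable_term_trunc (x : ℕ → ℂ) (c : ℕ) : Summable (term (trunc x c)) := by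
  apply summable_term
  apply summable_of_ne_finset_zero (s := Finset.range (c + 1))
  intro j hj
  rw [Finset.mem_range, not_lt] at hj
  have : trunc x c (j + 1) = 0 := by
    rw [trunc, if_neg]; omega
  rw [this, zero_mul, norm_zero]

lemma trunc_entries {x : ℕ → ℂ} {c : ℕ} {p : A} (h : term (trunc x c) p ≠ 0) (i : Fin p.1) :
    p.2.1 i + 1 ≤ c := by
  by_contra hc
  apply h
  have hz : trunc x c (p.2.1 i + 1) = 0 := by rw [trunc, if_neg]; omega
  rw [term, Finset.prod_eq_zero (Finset.mem_univ i) (by rw [hz, mul_zero]), mul_zero]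

lemma term_trunc_congr (x : ℕ → ℂ) {c c' : ℕ} (p : A) (h : ∀ i, p.2.1 i + 1 ≤ c)
    (h' : ∀ i, p.2.1 i + 1 ≤ c') : term (trunc x c) p = term (trunc x c') p := by
  rw [term, term]
  congr 1
  apply Finset.prod_congr rfl
  intro i _
  have e1 : trunc x c (p.2.1 i) = x (p.2.1 i) := if_pos (by have := h i; omega)
  have e2 : trunc x c (p.2.1 i + 1) = x (p.2.1 i + 1) := if_pos (h i)
  have e3 : trunc x c' (p.2.1 i) = x (p.2.1 i) := if_pos (by have := h' i; omega)
  have e4 : trunc x c' (p.2.1 i + 1) = x (p.2.1 i + 1) := if_pos (h' i)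
  rw [e1, e2, e3, e4]

/-! ### the set S2 and snoc -/

def S2 (n : ℕ) : Set A := {p : A | ∀ i : Fin p.1, p.2.1 i ≠ n}

lemma adm_snoc {m n : ℕ} {k : Fin m → ℕ} (hn : 1 ≤ n) (hk : FAdm m k)
    (hb : ∀ i, k i + 2 ≤ n) : FAdm (m + 1) (Fin.snoc k n) := by
  constructor
  · intro i
    induction i using Fin.lastCases with
    | last => simpa using hn
    | cast i => simpa using hk.1 i
  · intro i j hij
    induction j using Fin.lastCases with
    | last =>
      induction i using Fin.lastCases with
      | last => simp at hij
      | cast i =>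
        simp only [Fin.snoc_castSucc, Fin.snoc_last]
        exact hb i
    | cast j =>
      induction i using Fin.lastCases with
      | last =>
        exfalso
        have h1 : (Fin.last m : ℕ) = m := rfl
        have h2 : (j.castSucc : ℕ) = (j : ℕ) := rfl
        have := j.2
        omega
      | cast i =>
        simp only [Fin.snoc_castSucc]
        exact hk.2 i j (by simpa using hij)

lemma tsum_S2 (x : ℕ → ℂ) (n : ℕ) (_hn : 1 ≤ n) :
    ∑' p : ↥(S2 n), term (trunc x (n + 1)) ↑p = ∑' q : A, term (trunc x n) q := by
  apply tsum_eq_tsum_of_ne_zero_bij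
    (i := fun q => (⟨q.1, fun i hi => by
      have := trunc_entries q.2 i
      omega⟩ : ↥(S2 n)))
  · intro q q' e
    apply Subtype.ext
    exact congrArg (fun r : ↥(S2 n) => r.val) e
  · rintro ⟨p, hmem⟩ hne
    simp only [Function.mem_support] at hne
    have hent : ∀ i : Fin p.1, p.2.1 i + 1 ≤ n := by
      intro i
      have h1 := trunc_entries hne i
      have h2 := hmem i
      omega
    have hval : term (trunc x n) p = term (trunc x (n + 1)) p :=
      term_trunc_congr x p hent (fun i => by have := hent i; omega)
    have hsupp : p ∈ Function.support (term (trunc x n)) := by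
      rw [Function.mem_support, hval]; exact hne
    exact ⟨⟨p, hsupp⟩, rfl⟩
  · rintro ⟨q, hq⟩
    rw [Function.mem_support] at hq
    have hent := fun i => trunc_entries hq i
    exact (term_trunc_congr x q (fun i => by have := hent i; omega) hent)

lemma snoc_term (x : ℕ → ℂ) (n : ℕ) (hn : 1 ≤ n) {m : ℕ} {k : Fin m → ℕ} (hk : FAdm m k)
    (hadm' : FAdm (m + 1) (Fin.snoc k n)) (hbq : ∀ i, k i + 2 ≤ n) :
    term (trunc x (n + 1)) ⟨m + 1, ⟨Fin.snoc k n, hadm'⟩⟩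
      = -(x n * x (n + 1)) * term (trunc x (n - 1)) ⟨m, k, hk⟩ := by
  rw [term, term, Fin.prod_univ_castSucc]
  simp only [Fin.snoc_castSucc, Fin.snoc_last]
  have h1 : trunc x (n + 1) n = x n := by
    simp only [trunc]; rw [if_pos (by omega)]
  have h2 : trunc x (n + 1) (n + 1) = x (n + 1) := by
    simp only [trunc]; rw [if_pos (by omega)]
  have hcs : ∀ i : Fin m, trunc x (n + 1) (k i) * trunc x (n + 1) (k i + 1)
      = trunc x (n - 1) (k i) * trunc x (n - 1) (k i + 1) := by
    intro i
    have h3 := hbq i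
    simp only [trunc]
    rw [if_pos (by omega), if_pos (by omega), if_pos (by omega), if_pos (by omega)]
  rw [h1, h2, Finset.prod_congr rfl (fun i _ => hcs i), pow_succ]
  ring

lemma tsum_S2c (x : ℕ → ℂ) (n : ℕ) (hn : 1 ≤ n) :
    ∑' p : ↥(S2 n)ᶜ, term (trunc x (n + 1)) ↑p
      = ∑' q : A, -(x n * x (n + 1)) * term (trunc x (n - 1)) q := by
  have hb : ∀ q : A, q ∈ Function.support
      (fun q => -(x n * x (n + 1)) * term (trunc x (n - 1)) q) →
      ∀ i : Fin q.1, q.2.1 i + 2 ≤ n := by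
    intro q hq i
    rw [Function.mem_support] at hq
    have : term (trunc x (n - 1)) q ≠ 0 := by
      intro h; apply hq; rw [h, mul_zero]
    have := trunc_entries this i
    omega
  apply tsum_eq_tsum_of_ne_zero_bij
    (i := fun q => (⟨⟨q.1.1 + 1, ⟨Fin.snoc q.1.2.1 n, adm_snoc hn q.1.2.2 (hb q.1 q.2)⟩⟩,
      fun h => by
        have := h (Fin.last q.1.1)
        simp at this⟩ : ↥(S2 n)ᶜ))
  · rintro ⟨⟨m, k, hk⟩, hq⟩ ⟨⟨m', k', hk'⟩, hq'⟩ e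
    have e0 : (⟨m + 1, ⟨Fin.snoc k n, _⟩⟩ : A) = ⟨m' + 1, ⟨Fin.snoc k' n, _⟩⟩ :=
      Subtype.ext_iff.mp e
    injection e0 with e1 e2
    have e1' : m = m' := by omega
    subst e1'
    have e3 := Subtype.ext_iff.mp (eq_of_heq e2)
    apply Subtype.ext
    apply A_ext
    intro i
    have := congrFun e3 i.castSucc
    simpa using this
  · rintro ⟨⟨M, K, hK⟩, hmem⟩ hne
    simp only [Function.mem_support] at hne
    have hex : ∃ i : Fin M, K i = n := by
      by_contra hc
      push_neg at hc
      exact hmem hc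
    obtain ⟨i1, hi1⟩ := hex
    have hub : ∀ i : Fin M, K i ≤ n := by
      intro i
      have h1 : K i + 1 ≤ n + 1 := trunc_entries hne i
      omega
    have hlast : (i1 : ℕ) = M - 1 := by
      by_contra hc
      have hlt : (i1 : ℕ) + 1 < M := by have := i1.2; omega
      have := hK.2 i1 ⟨(i1 : ℕ) + 1, hlt⟩ rfl
      have := hub ⟨(i1 : ℕ) + 1, hlt⟩
      omega
    obtain ⟨m, rfl⟩ : ∃ m, M = m + 1 := ⟨M - 1, by have := i1.pos; omega⟩
    have hKlast : K (Fin.last m) = n := by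
      have : i1 = Fin.last m := Fin.ext (by simpa using hlast)
      rwa [this] at hi1
    have hadm : FAdm m (fun i => K i.castSucc) := by
      constructor
      · intro i; exact hK.1 _
      · intro i j hij
        exact hK.2 i.castSucc j.castSucc (by simpa using hij)
    have hbnd : ∀ i : Fin m, K i.castSucc + 2 ≤ n := by
      intro i
      have hlt : (i : ℕ) < m := i.2
      have := adm_chain hK (m - (i : ℕ)) i.castSucc (Fin.last m) (by simp only [Fin.coe_castSucc, Fin.val_last]; omega)
      rw [hKlast] at this
      omega
    set q : A := ⟨m, ⟨fun i => K i.castSucc, hadm⟩⟩ with hqdef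
    have hiq : (⟨m + 1, ⟨Fin.snoc (fun i => K i.castSucc) n, adm_snoc hn hadm hbnd⟩⟩ : A)
        = ⟨m + 1, K, hK⟩ := by
      apply A_ext
      intro i
      induction i using Fin.lastCases with
      | last => simpa using hKlast.symm
      | cast i => simp
    have hval : -(x n * x (n + 1)) * term (trunc x (n - 1)) q = term (trunc x (n + 1)) ⟨m + 1, K, hK⟩ := by
      rw [← hiq]
      exact (snoc_term x n hn hadm (adm_snoc hn hadm hbnd) hbnd).symm
    have hsupp : q ∈ Function.support
        (fun q => -(x n * x (n + 1)) * term (trunc x (n - 1)) q) := by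
      rw [Function.mem_support, hval]
      exact hne
    refine ⟨⟨q, hsupp⟩, Subtype.ext hiq⟩
  · rintro ⟨q, hq⟩
    rcases q with ⟨m, k, hk⟩
    have hbq := hb _ hq
    exact snoc_term x n hn hk (adm_snoc hn hk hbq) hbq

lemma L2 (x : ℕ → ℂ) (n : ℕ) (hn : 1 ≤ n) :
    FcalFin (n + 1) x = FcalFin n x - x n * x (n + 1) * FcalFin (n - 1) x := by
  have hsum : Summable (term (trunc x (n + 1))) := summable_term_trunc x (n + 1)
  have hsplit := hsum.tsum_subtype_add_tsum_subtype_compl (S2 n)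
  rw [FcalFin_eq, ← hsplit, tsum_S2 x n hn, tsum_S2c x n hn, tsum_mul_left,
    FcalFin_eq n x, FcalFin_eq (n - 1) x]
  ring


/-! ### trivial evaluations -/

def p0 : A := ⟨0, ⟨Fin.elim0, ⟨fun i => i.elim0, fun i => i.elim0⟩⟩⟩

lemma Fcal_one {y : ℕ → ℂ} (h : ∀ j, 2 ≤ j → y j = 0) : Fcal y = 1 := by
  rw [Fcal_eq]
  rw [tsum_eq_single p0]
  · show (-1 : ℂ) ^ 0 * ∏ i : Fin 0, (y (Fin.elim0 i) * y (Fin.elim0 i + 1)) = 1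
    simp
  · rintro ⟨m, k, hk⟩ hb
    rcases m with - | m
    · exfalso
      exact hb (A_ext fun i => i.elim0)
    · have h0 : y (k 0 + 1) = 0 := h _ (by have := hk.1 0; omega)
      rw [term, Finset.prod_eq_zero (Finset.mem_univ 0) (by rw [h0, mul_zero]), mul_zero]

lemma FcalFin_zero (x : ℕ → ℂ) : FcalFin 0 x = 1 :=
  Fcal_one fun j hj => if_neg (by omega)

lemma FcalFin_one (x : ℕ → ℂ) : FcalFin 1 x = 1 :=
  Fcal_one fun j hj => if_neg (by omega)

end F2aux

open F2aux in
/-- For every x ∈ D and k ≥ 1: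
𝔉(x) = 𝔉(x₁,…,x_k) 𝔉(Tᵏx) - 𝔉(x₁,…,x_{k-1}) x_k x_{k+1} 𝔉(T^{k+1}x). -/
theorem stmt_2 (x : ℕ → ℂ) (hx : Summable fun k : ℕ => ‖x (k + 1) * x (k + 2)‖)
    (k : ℕ) (hk : 1 ≤ k) :
    Fcal x = FcalFin k x * Fcal (fun j => x (j + k))
      - FcalFin (k - 1) x * (x k * x (k + 1)) * Fcal (fun j => x (j + k + 1)) := by
  induction k, hk using Nat.le_induction with
  | base =>
    rw [FcalFin_one, show (1 - 1 : ℕ) = 0 from rfl, FcalFin_zero, one_mul, one_mul]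
    have e2 : (fun j => x (j + 1 + 1)) = fun j => x (j + 2) := by
      funext j
      rw [show j + 1 + 1 = j + 2 from by omega]
    rw [e2]
    exact L1 x hx
  | succ k hk1 ih =>
    have hshift : Summable fun j : ℕ => ‖x (j + k + 1) * x (j + k + 2)‖ :=
      (summable_nat_add_iff (f := fun n => ‖x (n + 1) * x (n + 2)‖) k).mpr hx
    have hy' : Summable fun j : ℕ => ‖x (j + 1 + k) * x (j + 2 + k)‖ := by
      have efun : (fun j : ℕ => ‖x (j + 1 + k) * x (j + 2 + k)‖)
          = fun j : ℕ => ‖x (j + k + 1) * x (j + k + 2)‖ := by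
        funext j
        rw [show j + 1 + k = j + k + 1 from by omega, show j + 2 + k = j + k + 2 from by omega]
      rw [efun]
      exact hshift
    have hL1 := L1 (fun j => x (j + k)) hy'
    beta_reduce at hL1
    have hL2 := L2 x k hk1
    have e1 : (fun j => x (j + 1 + k)) = fun j => x (j + k + 1) := by
      funext j
      rw [show j + 1 + k = j + k + 1 from by omega]
    have e2 : (fun j => x (j + 2 + k)) = fun j => x (j + k + 2) := by
      funext j
      rw [show j + 2 + k = j + k + 2 from by omega]
    have e3 : (fun j => x (j + (k + 1))) = fun j => x (j + k + 1) := by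
      funext j
      rw [show j + (k + 1) = j + k + 1 from by omega]
    have e4 : (fun j => x (j + (k + 1) + 1)) = fun j => x (j + k + 2) := by
      funext j
      rw [show j + (k + 1) + 1 = j + k + 2 from by omega]
    have e5 : x (1 + k) = x (k + 1) := by rw [Nat.add_comm]
    have e6 : x (2 + k) = x (k + 2) := by rw [Nat.add_comm]
    rw [e1, e2, e5, e6] at hL1
    rw [e3, e4, show k + 1 - 1 = k from rfl, hL2, ih, hL1]
    ring
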